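/- Verification of approximate current-state opacity: a metric system S is δ-approximate current-state opaque if and only if every reachable state (x,q) of its δ-approximate current-state estimator S_C satisfies q ⊄ X_S. -/

import Mathlib

open Metric Set

section OpacityDefs

variable {X U Y Xa Ua Xb Ub Xc Uc : Type*}

/-- A run of length `n` of the system with transition relation `tr`
(each step uses some input). -/
def IsRun (tr : X → U → X → Prop) (n : ℕ) (x : ℕ → X) : Prop :=
  ∀ i < n, ∃ u, tr (x i) u (x (i + 1))

/-- Exact initial-state opacity. -/
def ExactInitOpaque {Y : Type*} (X0 XS : Set X) (tr : X → U → X → Prop)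
    (H : X → Y) : Prop :=
  ∀ n : ℕ, ∀ x : ℕ → X, x 0 ∈ X0 ∩ XS → IsRun tr n x →
    ∃ x' : ℕ → X, x' 0 ∈ X0 \ XS ∧ IsRun tr n x' ∧ ∀ i ≤ n, H (x i) = H (x' i)

/-- δ-approximate initial-state opacity. -/
def ApproxInitOpaque [MetricSpace Y] (X0 XS : Set X) (tr : X → U → X → Prop)
    (H : X → Y) (δ : ℝ) : Prop :=
  ∀ n : ℕ, ∀ x : ℕ → X, x 0 ∈ X0 ∩ XS → IsRun tr n x →
    ∃ x' : ℕ → X, x' 0 ∈ X0 \ XS ∧ IsRun tr n x' ∧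
      ∀ i ≤ n, dist (H (x i)) (H (x' i)) ≤ δ

/-- δ-approximate current-state opacity. -/
def ApproxCurOpaque [MetricSpace Y] (X0 XS : Set X) (tr : X → U → X → Prop)
    (H : X → Y) (δ : ℝ) : Prop :=
  ∀ n : ℕ, ∀ x : ℕ → X, x 0 ∈ X0 → IsRun tr n x → x n ∈ XS →
    ∃ x' : ℕ → X, x' 0 ∈ X0 ∧ IsRun tr n x' ∧ x' n ∉ XS ∧
      ∀ i ≤ n, dist (H (x i)) (H (x' i)) ≤ δ

/-- δ-approximate infinite-step opacity. -/
def ApproxInfOpaque [MetricSpace Y] (X0 XS : Set X) (tr : X → U → X → Prop)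
    (H : X → Y) (δ : ℝ) : Prop :=
  ∀ n : ℕ, ∀ x : ℕ → X, ∀ k ≤ n, x 0 ∈ X0 → IsRun tr n x → x k ∈ XS →
    ∃ x' : ℕ → X, x' 0 ∈ X0 ∧ IsRun tr n x' ∧ x' k ∉ XS ∧
      ∀ i ≤ n, dist (H (x i)) (H (x' i)) ≤ δ

/-- Standing assumption: no initial state has all its δ-close initial states secret. -/
def StandingAssumption [MetricSpace Y] (X0 XS : Set X) (H : X → Y) (δ : ℝ) : Prop :=
  ∀ x0 ∈ X0, ¬ ({x ∈ X0 | dist (H x0) (H x) ≤ δ} ⊆ XS)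

/-- Predecessors of a set of states (under any input). -/
def PreSet (tr : X → U → X → Prop) (q : Set X) : Set X :=
  {z | ∃ u, ∃ w ∈ q, tr z u w}

/-- Successors of a set of states (under any input). -/
def PostSet (tr : X → U → X → Prop) (q : Set X) : Set X :=
  {z | ∃ u, ∃ w ∈ q, tr w u z}

/-- Initial states of the δ-approximate initial-state estimator. -/
def InitEstInit [MetricSpace Y] (H : X → Y) (δ : ℝ) : Set (X × Set X) :=
  {p | p.2 = {x' | dist (H p.1) (H x') ≤ δ}}

/-- Transition relation of the δ-approximate initial-state estimator. -/
def InitEstTr [MetricSpace Y] (tr : X → U → X → Prop) (H : X → Y) (δ : ℝ)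
    (p : X × Set X) (u : U) (p' : X × Set X) : Prop :=
  tr p'.1 u p.1 ∧ p'.2 = PreSet tr p.2 ∩ {x'' | dist (H p'.1) (H x'') ≤ δ}

/-- Reachable states of the δ-approximate initial-state estimator. -/
def InitEstReach [MetricSpace Y] (tr : X → U → X → Prop) (H : X → Y) (δ : ℝ) :
    Set (X × Set X) :=
  {p | ∃ (n : ℕ) (pr : ℕ → X × Set X) (u : ℕ → U), pr 0 ∈ InitEstInit H δ ∧
    (∀ i < n, InitEstTr tr H δ (pr i) (u i) (pr (i + 1))) ∧ pr n = p}

/-- Initial states of the δ-approximate current-state estimator. -/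
def CurEstInit [MetricSpace Y] (X0 : Set X) (H : X → Y) (δ : ℝ) : Set (X × Set X) :=
  {p | p.1 ∈ X0 ∧ p.2 = {x' ∈ X0 | dist (H p.1) (H x') ≤ δ}}

/-- Transition relation of the δ-approximate current-state estimator. -/
def CurEstTr [MetricSpace Y] (tr : X → U → X → Prop) (H : X → Y) (δ : ℝ)
    (p : X × Set X) (u : U) (p' : X × Set X) : Prop :=
  tr p.1 u p'.1 ∧ p'.2 = PostSet tr p.2 ∩ {x'' | dist (H p'.1) (H x'') ≤ δ}

/-- Reachable states of the δ-approximate current-state estimator. -/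
def CurEstReach [MetricSpace Y] (X0 : Set X) (tr : X → U → X → Prop) (H : X → Y)
    (δ : ℝ) : Set (X × Set X) :=
  {p | ∃ (n : ℕ) (pr : ℕ → X × Set X) (u : ℕ → U), pr 0 ∈ CurEstInit X0 H δ ∧
    (∀ i < n, CurEstTr tr H δ (pr i) (u i) (pr (i + 1))) ∧ pr n = p}

/-- ε-approximate initial-state opacity preserving simulation relation from
system `a` to system `b`. -/
def InitSOPSim [MetricSpace Y] (Xa0 XaS : Set Xa) (tra : Xa → Ua → Xa → Prop)
    (Ha : Xa → Y) (Xb0 XbS : Set Xb) (trb : Xb → Ub → Xb → Prop) (Hb : Xb → Y)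
    (ε : ℝ) (R : Set (Xa × Xb)) : Prop :=
  (∀ xa0 ∈ Xa0 ∩ XaS, ∃ xb0 ∈ Xb0 ∩ XbS, (xa0, xb0) ∈ R) ∧
  (∀ xb0 ∈ Xb0 \ XbS, ∃ xa0 ∈ Xa0 \ XaS, (xa0, xb0) ∈ R) ∧
  (∀ p ∈ R, dist (Ha p.1) (Hb p.2) ≤ ε) ∧
  (∀ p ∈ R, ∀ (ua : Ua) (xa' : Xa), tra p.1 ua xa' →
    ∃ (ub : Ub) (xb' : Xb), trb p.2 ub xb' ∧ (xa', xb') ∈ R) ∧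
  (∀ p ∈ R, ∀ (ub : Ub) (xb' : Xb), trb p.2 ub xb' →
    ∃ (ua : Ua) (xa' : Xa), tra p.1 ua xa' ∧ (xa', xb') ∈ R)

/-- ε-approximate current-state opacity preserving simulation relation from
system `a` to system `b`. -/
def CurSOPSim [MetricSpace Y] (Xa0 XaS : Set Xa) (tra : Xa → Ua → Xa → Prop)
    (Ha : Xa → Y) (Xb0 XbS : Set Xb) (trb : Xb → Ub → Xb → Prop) (Hb : Xb → Y)
    (ε : ℝ) (R : Set (Xa × Xb)) : Prop :=
  (∀ xa0 ∈ Xa0, ∃ xb0 ∈ Xb0, (xa0, xb0) ∈ R) ∧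
  (∀ p ∈ R, dist (Ha p.1) (Hb p.2) ≤ ε) ∧
  (∀ p ∈ R, ∀ (ua : Ua) (xa' : Xa), tra p.1 ua xa' →
    ∃ (ub : Ub) (xb' : Xb), trb p.2 ub xb' ∧ (xa', xb') ∈ R) ∧
  (∀ p ∈ R, ∀ (ua : Ua) (xa' : Xa), tra p.1 ua xa' → xa' ∈ XaS →
    ∃ (ub : Ub) (xb' : Xb), trb p.2 ub xb' ∧ xb' ∈ XbS ∧ (xa', xb') ∈ R) ∧
  (∀ p ∈ R, ∀ (ub : Ub) (xb' : Xb), trb p.2 ub xb' →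
    ∃ (ua : Ua) (xa' : Xa), tra p.1 ua xa' ∧ (xa', xb') ∈ R) ∧
  (∀ p ∈ R, ∀ (ub : Ub) (xb' : Xb), trb p.2 ub xb' → xb' ∉ XbS →
    ∃ (ua : Ua) (xa' : Xa), tra p.1 ua xa' ∧ xa' ∉ XaS ∧ (xa', xb') ∈ R)

/-- ε-approximate infinite-step opacity preserving simulation relation:
simultaneously an ε-InitSOP and an ε-CurSOP simulation relation. -/
def InfSOPSim [MetricSpace Y] (Xa0 XaS : Set Xa) (tra : Xa → Ua → Xa → Prop)
    (Ha : Xa → Y) (Xb0 XbS : Set Xb) (trb : Xb → Ub → Xb → Prop) (Hb : Xb → Y)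
    (ε : ℝ) (R : Set (Xa × Xb)) : Prop :=
  InitSOPSim Xa0 XaS tra Ha Xb0 XbS trb Hb ε R ∧
  CurSOPSim Xa0 XaS tra Ha Xb0 XbS trb Hb ε R

end OpacityDefs


/-- Characterization of the second component of estimator states along a run. -/
lemma est_q_mem {X U Y : Type*} [MetricSpace Y]
    (X0 : Set X) (tr : X → U → X → Prop) (H : X → Y) (δ : ℝ)
    (pr : ℕ → X × Set X) (u : ℕ → U)
    (h0 : pr 0 ∈ CurEstInit X0 H δ) :
    ∀ n, (∀ i < n, CurEstTr tr H δ (pr i) (u i) (pr (i + 1))) →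
    ∀ z, z ∈ (pr n).2 ↔ ∃ x' : ℕ → X, x' 0 ∈ X0 ∧ IsRun tr n x' ∧ x' n = z ∧
      ∀ i ≤ n, dist (H ((pr i).1)) (H (x' i)) ≤ δ := by
  intro n
  induction n with
  | zero =>
    intro _ z
    obtain ⟨h01, h02⟩ := h0
    constructor
    · intro hz
      rw [h02] at hz
      exact ⟨fun _ => z, hz.1, fun i hi => absurd hi (Nat.not_lt_zero i),
        rfl, fun i hi => by simpa [Nat.le_zero.mp hi] using hz.2⟩
    · rintro ⟨x', hx0, _, hxn, hd⟩
      rw [h02]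
      exact ⟨hxn ▸ hx0, hxn ▸ hd 0 le_rfl⟩
  | succ n ih =>
    intro hstep z
    have ihn := ih (fun i hi => hstep i (Nat.lt_succ_of_lt hi))
    have htr := hstep n (Nat.lt_succ_self n)
    constructor
    · intro hz
      rw [htr.2] at hz
      obtain ⟨⟨u', w, hw, hwz⟩, hdz⟩ := hz
      obtain ⟨x', hx0, hrun, hxn, hd⟩ := (ihn w).1 hw
      refine ⟨fun i => if i ≤ n then x' i else z, by simpa using hx0, ?_,
        by simp, ?_⟩
      · intro i hi
        rcases Nat.lt_or_ge i n with h | h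
        · obtain ⟨u'', hu⟩ := hrun i h
          exact ⟨u'', by simpa [Nat.le_of_lt h, Nat.succ_le_of_lt h] using hu⟩
        · have hin : i = n := Nat.le_antisymm (Nat.lt_succ_iff.mp hi) h
          subst hin
          exact ⟨u', by simpa [hxn] using hwz⟩
      · intro i hi
        rcases Nat.lt_or_ge i (n + 1) with h | h
        · have hin : i ≤ n := Nat.lt_succ_iff.mp h
          simpa [hin] using hd i hin
        · have hin : i = n + 1 := Nat.le_antisymm hi h
          subst hin
          simpa using hdz
    · rintro ⟨x', hx0, hrun, hxn, hd⟩
      rw [htr.2]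
      refine ⟨?_, hxn ▸ hd (n + 1) le_rfl⟩
      obtain ⟨u', hu⟩ := hrun n (Nat.lt_succ_self n)
      exact ⟨u', x' n, (ihn (x' n)).2 ⟨x', hx0,
        fun i hi => hrun i (Nat.lt_succ_of_lt hi), rfl,
        fun i hi => hd i (Nat.le_succ_of_le hi)⟩, hxn ▸ hu⟩

/-- verification of δ-approximate current-state opacity via the
δ-approximate current-state estimator. -/
theorem approx_cur_opaque_iff_estimator {X U Y : Type*} [MetricSpace Y]
    (X0 XS : Set X) (tr : X → U → X → Prop) (H : X → Y) {δ : ℝ} (hδ : 0 ≤ δ)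
    (hsa : StandingAssumption X0 XS H δ) :
    ApproxCurOpaque X0 XS tr H δ ↔
      ∀ p ∈ CurEstReach X0 tr H δ, ¬ (p.2 ⊆ XS) := by
  constructor
  · rintro hop p ⟨n, pr, u, h0, hstep, hpn⟩ hsub
    subst hpn
    have hq := est_q_mem X0 tr H δ pr u h0 n hstep
    set x : ℕ → X := fun i => (pr i).1 with hx
    have hrun : IsRun tr n x := fun i hi => ⟨u i, (hstep i hi).1⟩
    have hxn : x n ∈ (pr n).2 :=
      (hq (x n)).2 ⟨x, h0.1, hrun, rfl, fun i _ => by exact le_trans (le_of_eq (dist_self _)) hδ⟩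
    obtain ⟨x', hx0', hrun', hxS', hd'⟩ := hop n x h0.1 hrun (hsub hxn)
    exact hxS' (hsub ((hq (x' n)).2 ⟨x', hx0', hrun', rfl, hd'⟩))
  · intro hest n x hx0 hrun hxS
    rcases Nat.eq_zero_or_pos n with hn | hn
    · subst hn
      obtain ⟨z, hz, hzS⟩ := Set.not_subset.mp (hsa (x 0) hx0)
      exact ⟨fun _ => z, hz.1, fun i hi => absurd hi (Nat.not_lt_zero i), hzS,
        fun i hi => by simpa [Nat.le_zero.mp hi] using hz.2⟩
    · obtain ⟨u0, _⟩ := hrun 0 hn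
      set u : ℕ → U := fun i =>
        if h : i < n then Classical.choose (hrun i h) else u0 with hu
      set q : ℕ → Set X := fun i =>
        Nat.rec {x' ∈ X0 | dist (H (x 0)) (H x') ≤ δ}
          (fun i qi => PostSet tr qi ∩ {x'' | dist (H (x (i + 1))) (H x'') ≤ δ}) i
        with hqdef
      set pr : ℕ → X × Set X := fun i => (x i, q i) with hpr
      have h0 : pr 0 ∈ CurEstInit X0 H δ := ⟨hx0, rfl⟩
      have hstep : ∀ i < n, CurEstTr tr H δ (pr i) (u i) (pr (i + 1)) := by
        intro i hi
        refine ⟨?_, rfl⟩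
        simp only [hu, hpr, dif_pos hi]
        exact Classical.choose_spec (hrun i hi)
      obtain ⟨z, hz, hzS⟩ := Set.not_subset.mp
        (hest (pr n) ⟨n, pr, u, h0, hstep, rfl⟩)
      obtain ⟨x', hx0', hrun', hxn', hd'⟩ :=
        (est_q_mem X0 tr H δ pr u h0 n hstep z).1 hz
      exact ⟨x', hx0', hrun', hxn' ▸ hzS, hd'⟩
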